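/- Weinstock's inequality fails for annuli: there exists ε ∈ (0,1) such that E(ε) > 2π; in fact E(1/10) > 2π, where E(ε) = ((1+ε²)/(2ε(1−ε)))·(1 − √(1 − 4ε((1−ε)/(1+ε²))²))·2π(1+ε). -/
import Mathlib


noncomputable def E (ε : ℝ) : ℝ :=
  ((1 + ε^2)/(2*ε*(1 - ε))) *
    (1 - Real.sqrt (1 - 4*ε*((1 - ε)/(1 + ε^2))^2)) * (2 * Real.pi * (1 + ε))

theorem weinstock_fails_for_annuli :
    (∃ ε ∈ Set.Ioo (0:ℝ) 1, E ε > 2 * Real.pi) ∧ E (1/10) > 2 * Real.pi := by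
  have key : E (1/10) > 2 * Real.pi := by
    have hs : Real.sqrt (1 - 4*(1/10)*((1 - 1/10)/(1 + (1/10:ℝ)^2))^2) < 827/1000 := by
      rw [show (1 - 4*(1/10:ℝ)*((1 - 1/10)/(1 + (1/10:ℝ)^2))^2) = 6961/10201 by norm_num]
      rw [Real.sqrt_lt' (by norm_num)]
      norm_num
    have hpi := Real.pi_pos
    unfold E
    nlinarith [hpi, hs]
  exact ⟨⟨1/10, by norm_num, key⟩, key⟩
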